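/- Let p_1, ..., p_n be pairwise distinct real (or complex) numbers and m a natural number. Then ∑ over all n-tuples (m_1,...,m_n) of non-negative integers with m_1 + ... + m_n = m of ∏_{i=1}^n p_i^{m_i} equals ∑_{i=1}^n p_i^{m+n-1} / ∏_{j≠i} (p_i - p_j). -/

import Mathlib

open Finset Polynomial

lemma basis_eq_C_mul_nodal {ι : Type*} [DecidableEq ι] (v : ι → ℝ) (s : Finset ι) (i : ι) :
    Lagrange.basis s v i
      = C (∏ j ∈ s.erase i, (v i - v j)⁻¹) * Lagrange.nodal (s.erase i) v := by
  rw [Lagrange.basis, Lagrange.nodal, map_prod, ← prod_mul_distrib]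
  rfl

lemma coeff_basis {ι : Type*} [DecidableEq ι] (v : ι → ℝ) (s : Finset ι) (i : ι) (hi : i ∈ s) :
    (Lagrange.basis s v i).coeff (s.card - 1) = ∏ j ∈ s.erase i, (v i - v j)⁻¹ := by
  rw [basis_eq_C_mul_nodal, coeff_C_mul]
  have h1 : (Lagrange.nodal (s.erase i) v).natDegree = s.card - 1 := by
    rw [Lagrange.natDegree_nodal, card_erase_of_mem hi]
  rw [← h1, Lagrange.nodal_monic.coeff_natDegree, mul_one]

lemma delta {ι : Type*} [DecidableEq ι] (v : ι → ℝ) (s : Finset ι) (hv : Set.InjOn v s)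
    (k : ℕ) (hk : k < s.card) :
    ∑ i ∈ s, v i ^ k * ∏ j ∈ s.erase i, (v i - v j)⁻¹
      = if k = s.card - 1 then 1 else 0 := by
  have h1 : ((X : ℝ[X]) ^ k) = Lagrange.interpolate s v (fun i => v i ^ k) := by
    have h2 := Lagrange.eq_interpolate (f := (X : ℝ[X]) ^ k) hv
      (by rw [degree_X_pow]; exact_mod_cast hk)
    simpa using h2
  have h3 := congrArg (fun q : ℝ[X] => q.coeff (s.card - 1)) h1
  simp only [coeff_X_pow, Lagrange.interpolate_apply, finset_sum_coeff, coeff_C_mul] at h3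
  calc ∑ i ∈ s, v i ^ k * ∏ j ∈ s.erase i, (v i - v j)⁻¹
      = ∑ i ∈ s, v i ^ k * (Lagrange.basis s v i).coeff (s.card - 1) :=
        sum_congr rfl fun i hi => by rw [coeff_basis v s i hi]
    _ = if k = s.card - 1 then 1 else 0 := by rw [← h3]; simp [eq_comm]

lemma piAntidiag_singleton {ι : Type*} [DecidableEq ι] (a : ι) (m : ℕ) :
    (({a} : Finset ι).piAntidiag m) = {fun j => if j = a then m else 0} := by
  ext f
  simp only [mem_piAntidiag, mem_singleton, sum_singleton]
  constructor
  · rintro ⟨h1, h2⟩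
    funext j
    by_cases hj : j = a
    · subst hj; simp [h1]
    · simp only [hj, if_false]
      by_contra h
      exact hj (h2 j h)
  · rintro rfl
    refine ⟨by simp, fun i hi => ?_⟩
    simp only [ne_eq, ite_eq_right_iff, not_forall] at hi
    exact hi.1

lemma key {ι : Type*} [DecidableEq ι] (v : ι → ℝ) :
    ∀ s : Finset ι, Set.InjOn v s → s.Nonempty → ∀ m : ℕ,
    ∑ f ∈ s.piAntidiag m, ∏ i ∈ s, v i ^ f i
      = ∑ i ∈ s, v i ^ (m + s.card - 1) * ∏ j ∈ s.erase i, (v i - v j)⁻¹ := by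
  intro s
  induction s using Finset.cons_induction with
  | empty => intro _ hs; exact absurd hs (by simp)
  | cons a t ha IH =>
    intro hv _ m
    rcases t.eq_empty_or_nonempty with rfl | ht
    · rw [show (cons a ∅ ‹_› : Finset ι) = {a} from rfl, piAntidiag_singleton,
        sum_singleton, prod_singleton, sum_singleton, erase_singleton,
        prod_empty, mul_one, card_singleton]
      have hbeta : (fun j => if j = a then m else 0) a = m := by simp
      rw [hbeta]
      norm_num
    · -- main inductive step
      have hsub : (t : Set ι) ⊆ (cons a t ha : Finset ι) := by
        intro x hx; simp only [coe_cons, Set.mem_insert_iff]; right; exact hx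
      have htv : Set.InjOn v t := hv.mono hsub
      have hva : ∀ i ∈ t, v i ≠ v a := fun i hi h => by
        have : i = a := hv (hsub hi) (by simp) h
        exact ha (this ▸ hi)
      have hc1 : 1 ≤ t.card := ht.card_pos
      have hprod : ∀ i ∈ t, ∏ j ∈ (cons a t ha).erase i, (v i - v j)⁻¹
          = (v i - v a)⁻¹ * ∏ j ∈ t.erase i, (v i - v j)⁻¹ := fun i hi => by
        rw [cons_eq_insert, erase_insert_of_ne (ne_of_mem_of_not_mem hi ha).symm,
          prod_insert (fun h => ha (mem_of_mem_erase h))]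
      have hd := delta v (cons a t ha) hv (t.card - 1) (by rw [card_cons]; omega)
      rw [if_neg (by rw [card_cons]; omega), sum_cons, erase_cons,
        sum_congr rfl (fun i hi => by rw [hprod i hi])] at hd
      calc ∑ f ∈ (cons a t ha).piAntidiag m, ∏ i ∈ cons a t ha, v i ^ f i
          = ∑ p ∈ Finset.HasAntidiagonal.antidiagonal m, v a ^ p.1 *
              ∑ g ∈ t.piAntidiag p.2, ∏ i ∈ t, v i ^ g i := by
            rw [piAntidiag_cons ha, sum_disjiUnion]
            refine sum_congr rfl fun p hp => ?_
            rw [sum_map, mul_sum]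
            refine sum_congr rfl fun g hg => ?_
            obtain ⟨hgs, hgsupp⟩ := mem_piAntidiag.mp hg
            have hga : g a = 0 := by
              by_contra h; exact ha (hgsupp a h)
            have hite : ∀ i ∈ t, v i ^ ((addRightEmbedding fun j => if j = a then p.1 else 0) g i)
                = v i ^ g i := fun i hi => by
              simp [addRightEmbedding_apply, ne_of_mem_of_not_mem hi ha]
            rw [prod_cons, prod_congr rfl hite]
            simp [addRightEmbedding_apply, hga]
        _ = ∑ p ∈ Finset.HasAntidiagonal.antidiagonal m, v a ^ p.1 *
              ∑ i ∈ t, v i ^ p.2 * (v i ^ (t.card - 1) * ∏ j ∈ t.erase i, (v i - v j)⁻¹) := by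
            refine sum_congr rfl fun p _ => ?_
            rw [IH htv ht p.2]
            congr 1
            refine sum_congr rfl fun i hi => ?_
            rw [← mul_assoc, ← pow_add]
            congr 2
            omega
        _ = ∑ i ∈ t, (∑ p ∈ Finset.HasAntidiagonal.antidiagonal m, v a ^ p.1 * v i ^ p.2) *
              (v i ^ (t.card - 1) * ∏ j ∈ t.erase i, (v i - v j)⁻¹) := by
            simp_rw [mul_sum]
            rw [Finset.sum_comm]
            refine sum_congr rfl fun i _ => ?_
            rw [sum_mul]
            exact sum_congr rfl fun p _ => by ring
        _ = ∑ i ∈ t, ((v i ^ (m + 1) - v a ^ (m + 1)) * (v i - v a)⁻¹) *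
              (v i ^ (t.card - 1) * ∏ j ∈ t.erase i, (v i - v j)⁻¹) := by
            refine sum_congr rfl fun i hi => ?_
            congr 1
            have hne : v i - v a ≠ 0 := sub_ne_zero.mpr (hva i hi)
            rw [Finset.Nat.sum_antidiagonal_eq_sum_range_succ_mk, ← div_eq_mul_inv,
              eq_div_iff hne]
            have hg := geom_sum₂_mul (v a) (v i) (m + 1)
            simp only [Nat.add_sub_cancel, Nat.succ_eq_add_one] at hg ⊢
            linear_combination (-1 : ℝ) * hg
        _ = ∑ i ∈ cons a t ha, v i ^ (m + (cons a t ha).card - 1) *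
              ∏ j ∈ (cons a t ha).erase i, (v i - v j)⁻¹ := by
            have hS : ∑ i ∈ t, v i ^ (t.card - 1) *
                ((v i - v a)⁻¹ * ∏ j ∈ t.erase i, (v i - v j)⁻¹)
                = -(v a ^ (t.card - 1) * ∏ j ∈ t, (v a - v j)⁻¹) := by
              linarith [hd]
            rw [sum_cons, erase_cons, card_cons]
            rw [show (∑ i ∈ t, v i ^ (m + (t.card + 1) - 1) *
                  ∏ j ∈ (cons a t ha).erase i, (v i - v j)⁻¹)
                = ∑ i ∈ t, v i ^ (m + (t.card + 1) - 1) *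
                  ((v i - v a)⁻¹ * ∏ j ∈ t.erase i, (v i - v j)⁻¹) from
              sum_congr rfl fun i hi => by rw [hprod i hi]]
            have hrw : ∀ i ∈ t, ((v i ^ (m + 1) - v a ^ (m + 1)) * (v i - v a)⁻¹) *
                  (v i ^ (t.card - 1) * ∏ j ∈ t.erase i, (v i - v j)⁻¹)
                = v i ^ (m + (t.card + 1) - 1) *
                    ((v i - v a)⁻¹ * ∏ j ∈ t.erase i, (v i - v j)⁻¹)
                  - v a ^ (m + 1) * (v i ^ (t.card - 1) *
                    ((v i - v a)⁻¹ * ∏ j ∈ t.erase i, (v i - v j)⁻¹)) := fun i hi => by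
              have hp : v i ^ (m + 1) * v i ^ (t.card - 1) = v i ^ (m + (t.card + 1) - 1) := by
                rw [← pow_add]; congr 1; omega
              linear_combination ((v i - v a)⁻¹ * ∏ j ∈ t.erase i, (v i - v j)⁻¹) * hp
            rw [sum_congr rfl hrw, sum_sub_distrib, ← mul_sum, hS]
            have hp2 : v a ^ (m + 1) * v a ^ (t.card - 1) = v a ^ (m + (t.card + 1) - 1) := by
              rw [← pow_add]; congr 1; omega
            linear_combination (∏ j ∈ t, (v a - v j)⁻¹) * hp2

theorem stmt_1 (n : ℕ) (hn : 1 ≤ n) (p : Fin n → ℝ) (hp : Function.Injective p) (m : ℕ) :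
    ∑ f ∈ (Fintype.piFinset fun _ : Fin n => Finset.range (m + 1)).filter
        (fun f => ∑ i, f i = m),
      ∏ i, p i ^ f i =
    ∑ i, p i ^ (m + n - 1) / ∏ j ∈ Finset.univ.erase i, (p i - p j) := by
  classical
  have h0 : (Fintype.piFinset fun _ : Fin n => Finset.range (m + 1)).filter
      (fun f => ∑ i, f i = m) = (Finset.univ : Finset (Fin n)).piAntidiag m := by
    ext f
    simp only [Finset.mem_filter, Fintype.mem_piFinset, Finset.mem_range, Finset.mem_piAntidiag,
      Finset.mem_univ, implies_true, and_true]
    constructor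
    · rintro ⟨-, h⟩; exact h
    · intro h
      refine ⟨fun i => ?_, h⟩
      have h1 := Finset.single_le_sum (f := f) (fun j _ => Nat.zero_le _) (Finset.mem_univ i)
      have h2 : f i ≤ m := le_of_le_of_eq h1 h
      omega
  have hne : (Finset.univ : Finset (Fin n)).Nonempty := ⟨⟨0, by omega⟩, Finset.mem_univ _⟩
  rw [h0, key p Finset.univ hp.injOn hne m]
  refine Finset.sum_congr rfl fun i _ => ?_
  rw [div_eq_mul_inv, ← Finset.prod_inv_distrib]
  congr 2
  simp
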